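/- arXiv:2106.04858 — 4 statements merged into one kernel-verified Lean document; each statement's English description precedes it below -/
import Mathlib

section
/- Given the NSFD scheme S_{n+1} = S_n − hβS_{n+1}φ_n and φ_{n+1} = (N−S_0)A(t_{n+1}) + hβ Σ_{j=0}^{n} A(t_{n+1−j}) S_{j+1} φ_j with A ≥ 0, S_0 ≥ 0, φ_0 ≥ 0, h ≥ 0, β ≥ 0, N ≥ S_0, all φ_n are non-negative. -/
/-- For the NSFD scheme, all iterates `S n` and `φ n` are nonnegative. -/
theorem stmt_2 (h β N : ℝ) (hh : 0 ≤ h) (hβ : 0 ≤ β)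
    (A : ℝ → ℝ) (hA : ∀ t, 0 ≤ t → 0 ≤ A t)
    (S φ : ℕ → ℝ) (hS0 : 0 ≤ S 0) (hN : S 0 ≤ N)
    (hφ0 : φ 0 = (N - S 0) * A 0)
    (hSrec : ∀ n, S (n + 1) = S n - h * β * S (n + 1) * φ n)
    (hφrec : ∀ n, φ (n + 1) = (N - S 0) * A ((n + 1) * h)
      + h * β * ∑ j ∈ Finset.range (n + 1), A ((n + 1 - j : ℕ) * h) * S (j + 1) * φ j) :
    (∀ n, 0 ≤ S n) ∧ (∀ n, 0 ≤ φ n) := by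
  have key : ∀ n, 0 ≤ S n ∧ 0 ≤ φ n := by
    intro n
    induction n using Nat.strong_induction_on with
    | _ n ih =>
      match n with
      | 0 =>
        refine ⟨hS0, ?_⟩
        rw [hφ0]
        exact mul_nonneg (by linarith) (hA 0 le_rfl)
      | Nat.succ m =>
        have hSm : 0 ≤ S m := (ih m (Nat.lt_succ_self m)).1
        have hφm : 0 ≤ φ m := (ih m (Nat.lt_succ_self m)).2
        have hSeq := hSrec m
        have hpos : (0:ℝ) < 1 + h * β * φ m := by positivity
        have hSval : S (m + 1) * (1 + h * β * φ m) = S m := by linear_combination hSeq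
        have hSnext : 0 ≤ S (m + 1) := by
          nlinarith [hSval]
        refine ⟨hSnext, ?_⟩
        rw [hφrec m]
        have h1 : 0 ≤ (N - S 0) * A ((m + 1) * h) :=
          mul_nonneg (by linarith) (hA _ (by positivity))
        have h2 : 0 ≤ ∑ j ∈ Finset.range (m + 1), A ((m + 1 - j : ℕ) * h) * S (j + 1) * φ j := by
          apply Finset.sum_nonneg
          intro j hj
          have hjm : j < m + 1 := Finset.mem_range.mp hj
          have hSj : 0 ≤ S (j + 1) := by
            rcases Nat.lt_succ_iff_lt_or_eq.mp hjm with h' | h'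
            · exact (ih (j + 1) (Nat.succ_lt_succ h')).1
            · rw [h']; exact hSnext
          have hφj : 0 ≤ φ j := (ih j hjm).2
          exact mul_nonneg (mul_nonneg (hA _ (by positivity)) hSj) hφj
        positivity
  exact ⟨fun n => (key n).1, fun n => (key n).2⟩
end

section
/- Let (φ_n) be non-negative with φ_n ≤ φ̄ for all n (φ̄ independent of h), and suppose hβ Σ_{n=0}^∞ φ_n ≤ C for all h ∈ (0, h̄] with C independent of h. Then Σ_{n=0}^∞ (log(1 + hβφ_n) − hβφ_n) → 0 as h → 0⁺. -/
open Filter Topology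

lemma log_aux {x : ℝ} (hx : 0 ≤ x) : |Real.log (1 + x) - x| ≤ x ^ 2 := by
  have h1 : (0:ℝ) < 1 + x := by linarith
  have hub : Real.log (1 + x) ≤ x := by
    have := Real.log_le_sub_one_of_pos h1
    linarith
  have hlb : x / (1 + x) ≤ Real.log (1 + x) := by
    have h2 : (0:ℝ) < 1 / (1 + x) := by positivity
    have := Real.log_le_sub_one_of_pos h2
    rw [Real.log_div one_ne_zero (by linarith), Real.log_one] at this
    have : -Real.log (1 + x) ≤ 1 / (1 + x) - 1 := by linarith
    have hx1 : 1 / (1 + x) - 1 = -(x / (1 + x)) := by field_simp; ring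
    linarith [hx1 ▸ this]
  have : x - Real.log (1 + x) ≤ x ^ 2 := by
    rw [div_le_iff₀ h1] at hlb
    nlinarith [mul_nonneg hx hx]
  rw [abs_sub_comm, abs_of_nonneg (by linarith)]
  exact this

/-- If `0 ≤ φ_n(h) ≤ φbar` uniformly and `hβ ∑ φ_n(h) ≤ C` uniformly for
`h ∈ (0, hbar]`, then `∑ (log(1 + hβφ_n(h)) - hβφ_n(h)) → 0` as `h → 0⁺`. -/
theorem stmt_12 (β φbar C hbar : ℝ) (hβ : 0 < β) (hφbar : 0 < φbar)
    (hC : 0 < C) (hhbar : 0 < hbar)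
    (φ : ℝ → ℕ → ℝ)
    (hφnonneg : ∀ h ∈ Set.Ioc 0 hbar, ∀ n, 0 ≤ φ h n)
    (hφbd : ∀ h ∈ Set.Ioc 0 hbar, ∀ n, φ h n ≤ φbar)
    (hφsum : ∀ h ∈ Set.Ioc 0 hbar, Summable (φ h))
    (hsumbd : ∀ h ∈ Set.Ioc 0 hbar, h * β * ∑' n : ℕ, φ h n ≤ C) :
    Tendsto (fun h : ℝ => ∑' n : ℕ, (Real.log (1 + h * β * φ h n) - h * β * φ h n))
      (𝓝[Set.Ioc 0 hbar] 0) (𝓝 0) := by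
  apply squeeze_zero_norm' (a := fun h => h * (β * φbar * C))
  · filter_upwards [eventually_mem_nhdsWithin] with h hh
    have hh0 : 0 < h := hh.1
    have key : ∀ n, ‖Real.log (1 + h * β * φ h n) - h * β * φ h n‖ ≤
        (h * β * φbar) * (h * β * φ h n) := by
      intro n
      have hx : 0 ≤ h * β * φ h n := by
        have := hφnonneg h hh n; positivity
      calc ‖Real.log (1 + h * β * φ h n) - h * β * φ h n‖
          ≤ (h * β * φ h n) ^ 2 := log_aux hx
        _ ≤ (h * β * φbar) * (h * β * φ h n) := by
            have h2 : h * β * φ h n ≤ h * β * φbar := by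
              exact mul_le_mul_of_nonneg_left (hφbd h hh n) (by positivity)
            rw [sq]
            exact mul_le_mul_of_nonneg_right h2 hx
    have hsum : Summable (fun n => (h * β * φbar) * (h * β * φ h n)) := by
      have := (hφsum h hh).mul_left (h * β)
      exact this.mul_left _
    calc ‖∑' n, (Real.log (1 + h * β * φ h n) - h * β * φ h n)‖
        ≤ ∑' n, (h * β * φbar) * (h * β * φ h n) :=
          tsum_of_norm_bounded hsum.hasSum key
      _ = (h * β * φbar) * (h * β * ∑' n, φ h n) := by
          rw [tsum_mul_left, tsum_mul_left]
      _ ≤ (h * β * φbar) * C := by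
          have hnn : 0 ≤ h * β * φbar := by positivity
          exact mul_le_mul_of_nonneg_left (hsumbd h hh) hnn
      _ = h * (β * φbar * C) := by ring
  · have : Tendsto (fun h : ℝ => h * (β * φbar * C)) (𝓝 0) (𝓝 (0 * (β * φbar * C))) :=
      (tendsto_id.mul_const _)
    simpa using this.mono_left nhdsWithin_le_nhds
end

section
/- Under the NSFD scheme the discrete final size relation holds: hβ Σ_{n=0}^∞ φ_{n+1} = R_0(h)·(1 − S_∞(h)/N), where R_0(h) = hβN Σ_{n=0}^∞ A(t_{n+1}) and S_∞(h) = lim_n S_n. -/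
open Filter Topology

/-- Discrete final size relation:
`hβ ∑ φ (n+1) = R₀(h) (1 - S∞(h)/N)` with `R₀(h) = hβN ∑ A(t_{n+1})`. -/
theorem stmt_17 (h β N Sinf : ℝ) (hh : 0 < h) (hβ : 0 < β) (hN : 0 < N)
    (A : ℝ → ℝ) (hA : ∀ t, 0 ≤ t → 0 ≤ A t)
    (hAsum : Summable (fun n : ℕ => A ((n + 1) * h)))
    (S φ : ℕ → ℝ) (hSnonneg : ∀ n, 0 ≤ S n) (hφnonneg : ∀ n, 0 ≤ φ n)
    (hSmono : ∀ n, S (n + 1) ≤ S n)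
    (hSlim : Tendsto S atTop (𝓝 Sinf))
    (hφsum : Summable φ)
    (hSrec : ∀ n, S (n + 1) = S n - h * β * S (n + 1) * φ n)
    (hφrec : ∀ n, φ (n + 1) = (N - S 0) * A ((n + 1) * h)
      + h * β * ∑ j ∈ Finset.range (n + 1), A ((n + 1 - j : ℕ) * h) * S (j + 1) * φ j) :
    h * β * ∑' n : ℕ, φ (n + 1) =
      (h * β * N * ∑' n : ℕ, A ((n + 1) * h)) * (1 - Sinf / N) := by
  set a : ℕ → ℝ := fun n => A ((n + 1) * h) with ha
  set b : ℕ → ℝ := fun j => h * β * S (j + 1) * φ j with hb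
  have hbeq : ∀ j, b j = S j - S (j + 1) := by
    intro j; have := hSrec j; simp only [hb]; linarith
  have hbnn : ∀ j, 0 ≤ b j := fun j => by
    rw [hbeq j]; linarith [hSmono j]
  have hann : ∀ n, 0 ≤ a n := fun n => by
    apply hA; positivity
  -- HasSum b (S 0 - Sinf)
  have hbsum : HasSum b (S 0 - Sinf) := by
    rw [hasSum_iff_tendsto_nat_of_nonneg hbnn]
    have : ∀ n, ∑ i ∈ Finset.range n, b i = S 0 - S n := by
      intro n
      simp only [hbeq]
      exact Finset.sum_range_sub' S n
    simp_rw [this]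
    exact tendsto_const_nhds.sub hSlim
  have hanorm : Summable fun n => ‖a n‖ := by
    refine hAsum.congr fun n => ?_
    rw [Real.norm_of_nonneg (hann n)]
  have hbnorm : Summable fun n => ‖b n‖ := by
    refine hbsum.summable.congr fun n => ?_
    rw [Real.norm_of_nonneg (hbnn n)]
  -- Cauchy product
  have hcauchy : HasSum (fun n => ∑ k ∈ Finset.range (n + 1), b k * a (n - k))
      ((∑' n, b n) * ∑' n, a n) := hasSum_sum_range_mul_of_summable_norm hbnorm hanorm
  -- rewrite φ (n+1)
  have hφ' : ∀ n, φ (n + 1) = (N - S 0) * a n + ∑ k ∈ Finset.range (n + 1), b k * a (n - k) := by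
    intro n
    rw [hφrec n, Finset.mul_sum]
    congr 1
    apply Finset.sum_congr rfl
    intro j hj
    have hjn : j ≤ n := Nat.lt_succ_iff.mp (Finset.mem_range.mp hj)
    have hcast : ((n + 1 - j : ℕ) : ℝ) = ((n - j : ℕ) : ℝ) + 1 := by
      have : n + 1 - j = (n - j) + 1 := by omega
      rw [this]; push_cast; ring
    simp only [hb, ha, hcast]
    ring
  have hφhs : HasSum (fun n => φ (n + 1))
      ((N - S 0) * ∑' n, a n + (S 0 - Sinf) * ∑' n, a n) := by
    rw [hbsum.tsum_eq] at hcauchy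
    have := ((hAsum.hasSum.mul_left (N - S 0)).add hcauchy)
    exact this.congr_fun fun n => hφ' n
  rw [hφhs.tsum_eq]
  have hN' : N ≠ 0 := ne_of_gt hN
  field_simp
  ring
end

section
/- The final size equation log(S_0/x) = R_0(1 − x/N), viewed as an equation for x ∈ (0, S_0], has a unique solution whenever 0 < S_0 ≤ N and R_0 > 0 — equivalently, the function g(x) = log(S_0/x) − R_0(1 − x/N) is strictly monotone on (0, N] beyond its critical point and changes sign exactly once on (0, S_0]. -/
open Real Set

/-- The final size equation `log(S₀/x) = R₀ (1 - x/N)` has a unique solution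
in `(0, S₀)` when `0 < S₀ < N` and `R₀ > 0`. -/
theorem stmt_19 (N S0 R0 : ℝ) (hN : 0 < N) (hS0 : 0 < S0) (hS0N : S0 < N)
    (hR0 : 0 < R0) :
    ∃! x : ℝ, x ∈ Set.Ioo 0 S0 ∧ Real.log (S0 / x) = R0 * (1 - x / N) := by
  set g : ℝ → ℝ := fun x => Real.log S0 - Real.log x - R0 * (1 - x / N) with hg
  set c : ℝ := N / R0 with hc
  have hcpos : 0 < c := div_pos hN hR0
  -- derivative of g
  have hderiv : ∀ x : ℝ, x ≠ 0 → HasDerivAt g (-(1/x) + R0 / N) x := by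
    intro x hx
    have h1 : HasDerivAt (fun y : ℝ => Real.log y) (1/x) x := by
      simpa [one_div] using Real.hasDerivAt_log hx
    have h2 : HasDerivAt (fun y : ℝ => R0 * (1 - y / N)) (R0 * (-(1/N))) x := by
      have h3 : HasDerivAt (fun y : ℝ => 1 - y / N) (-(1/N)) x := by
        simpa using ((hasDerivAt_id x).div_const N).const_sub 1
      exact h3.const_mul R0
    have := ((hasDerivAt_const x (Real.log S0)).sub h1).sub h2
    have e : (-(1/x) + R0 / N) = 0 - 1 / x - R0 * -(1 / N) := by ring
    rw [e]; exact this
  have hcont : ∀ x : ℝ, x ≠ 0 → ContinuousAt g x := fun x hx =>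
    (hderiv x hx).differentiableAt.continuousAt
  -- g is strictly antitone on (0, c]
  have hanti : StrictAntiOn g (Ioc 0 c) := by
    apply strictAntiOn_of_deriv_neg (convex_Ioc 0 c)
    · exact fun x hx => (hcont x (ne_of_gt hx.1)).continuousWithinAt
    · intro x hx
      rw [interior_Ioc] at hx
      rw [(hderiv x (ne_of_gt hx.1)).deriv]
      have h1 : R0 / N < 1 / x := by
        rw [div_lt_div_iff₀ hN hx.1]
        have := hx.2
        rw [hc, lt_div_iff₀ hR0] at this
        nlinarith
      linarith
  -- g is strictly monotone on [c, S0]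
  have hmono : StrictMonoOn g (Icc c S0) := by
    apply strictMonoOn_of_deriv_pos (convex_Icc c S0)
    · exact fun x hx => (hcont x (ne_of_gt (lt_of_lt_of_le hcpos hx.1))).continuousWithinAt
    · intro x hx
      rw [interior_Icc] at hx
      have hxpos : 0 < x := lt_trans hcpos hx.1
      rw [(hderiv x (ne_of_gt hxpos)).deriv]
      have h1 : 1 / x < R0 / N := by
        rw [div_lt_div_iff₀ hxpos hN]
        have := hx.1
        rw [hc, div_lt_iff₀ hR0] at this
        nlinarith
      linarith
  -- value at S0
  have hgS0 : g S0 < 0 := by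
    have : Real.log S0 - Real.log S0 = 0 := by ring
    have hpos : 0 < 1 - S0 / N := by
      have : S0 / N < 1 := (div_lt_one hN).mpr hS0N
      linarith
    have : g S0 = -(R0 * (1 - S0 / N)) := by simp [hg]
    rw [this]
    have := mul_pos hR0 hpos
    linarith
  -- a point where g is positive
  set x0 : ℝ := S0 * Real.exp (-(R0 + 1)) with hx0
  have hx0pos : 0 < x0 := mul_pos hS0 (Real.exp_pos _)
  have hx0lt : x0 < S0 := by
    have h1 : Real.exp (-(R0 + 1)) < 1 := by
      rw [Real.exp_lt_one_iff]; linarith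
    nlinarith
  have hlogx0 : Real.log x0 = Real.log S0 - (R0 + 1) := by
    rw [hx0, Real.log_mul hS0.ne' (Real.exp_pos _).ne', Real.log_exp]; ring
  have hgx0 : 0 < g x0 := by
    have : g x0 = 1 + R0 * (x0 / N) := by
      simp only [hg, hlogx0]; ring
    rw [this]
    have : 0 < R0 * (x0 / N) := mul_pos hR0 (div_pos hx0pos hN)
    linarith
  -- existence via IVT
  have hivt : (0 : ℝ) ∈ g '' Ioo x0 S0 := by
    apply intermediate_value_Ioo' (le_of_lt hx0lt)
    · intro x hx
      exact (hcont x (ne_of_gt (lt_of_lt_of_le hx0pos hx.1))).continuousWithinAt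
    · exact ⟨hgS0, hgx0⟩
  obtain ⟨x, hxmem, hgx⟩ := hivt
  have hxIoo : x ∈ Ioo (0:ℝ) S0 := ⟨lt_trans hx0pos hxmem.1, hxmem.2⟩
  -- every root in (0,S0) lies in (0, c]
  have key : ∀ z ∈ Ioo (0:ℝ) S0, g z = 0 → z ∈ Ioc (0:ℝ) c := by
    intro z hz hgz
    refine ⟨hz.1, ?_⟩
    by_contra hzc
    push_neg at hzc
    have h1 : g z < g S0 := hmono ⟨le_of_lt hzc, le_of_lt hz.2⟩
      ⟨le_of_lt (lt_trans hzc hz.2), le_refl _⟩ hz.2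
    rw [hgz] at h1
    linarith
  -- translate the equation to g = 0
  have hiff : ∀ z ∈ Ioo (0:ℝ) S0,
      (Real.log (S0 / z) = R0 * (1 - z / N) ↔ g z = 0) := by
    intro z hz
    rw [Real.log_div hS0.ne' (ne_of_gt hz.1), hg]
    constructor <;> intro h <;> [skip; skip] <;> simp only at h ⊢ <;> linarith
  refine ⟨x, ⟨hxIoo, ?_⟩, ?_⟩
  · exact (hiff x hxIoo).mpr hgx
  · rintro y ⟨hyIoo, hy⟩
    have hgy : g y = 0 := (hiff y hyIoo).mp hy
    exact hanti.injOn (key y hyIoo hgy) (key x hxIoo hgx) (by rw [hgy, hgx])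
end
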